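/- arXiv:0909.0363 — 5 statements merged into one kernel-verified Lean document; each statement's English description precedes it below -/
import Mathlib

section
/- Let n > 1, s(t) = (2n(n+1)/(n-1)·(t+1))^{1/(n+1)}, and u(x,t) = (1/s(t))·(1-(x/s(t))²)^{1/(n-1)} for 0 ≤ x < s(t). Then the interface satisfies ṡ(t) = -(n/(n-1)) · lim_{x→s(t)⁻} ∂ₓ(u^{n-1})(x,t). -/
open Real Set Filter

/-- The interface of the Barenblatt–Pattle solution satisfies
`ṡ(t) = -(n/(n-1)) · lim_{x→s(t)⁻} ∂ₓ(u^{n-1})(x,t)`. -/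
theorem barenblatt_interface_ode (n : ℝ) (hn : 1 < n) (s : ℝ → ℝ) (u : ℝ → ℝ → ℝ)
    (hs : ∀ t : ℝ, s t = (2*n*(n+1)/(n-1) * (t+1)) ^ ((1:ℝ)/(n+1)))
    (hu : ∀ x t : ℝ, 0 ≤ x → x < s t →
      u x t = (1 / s t) * (1 - (x / s t)^2) ^ ((1:ℝ)/(n-1))) :
    ∀ t : ℝ, 0 < t → ∃ L : ℝ,
      Tendsto (fun x => deriv (fun y => u y t ^ (n-1)) x)
        (nhdsWithin (s t) (Set.Iio (s t))) (nhds L) ∧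
      deriv s t = -(n/(n-1)) * L := by
  intro t ht
  have hn1 : (0:ℝ) < n - 1 := by linarith
  have hn1' : n - 1 ≠ 0 := ne_of_gt hn1
  have hnp1 : (0:ℝ) < n + 1 := by linarith
  set A : ℝ := 2*n*(n+1)/(n-1) * (t+1) with hA_def
  have hA : 0 < A := by
    apply mul_pos
    · apply div_pos
      · nlinarith
      · exact hn1
    · linarith
  have hst_eq : s t = A ^ ((1:ℝ)/(n+1)) := hs t
  set st : ℝ := s t with hst_def
  have hst : 0 < st := by rw [hst_eq]; exact Real.rpow_pos_of_pos hA _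
  set c : ℝ := (1/st) ^ (n-1) with hc_def
  refine ⟨c * (0 - 2 * (st/st)^1 * (1/st)), ?_, ?_⟩
  · -- tendsto of the derivative
    have hmem : Set.Ioo 0 st ∈ nhdsWithin st (Set.Iio st) := by
      rw [show Set.Ioo 0 st = Set.Iio st ∩ Set.Ioi 0 by ext y; simp [Set.mem_Ioo]; tauto]
      exact Filter.inter_mem self_mem_nhdsWithin
        (nhdsWithin_le_nhds (Ioi_mem_nhds hst))
    have hderiv : ∀ x ∈ Set.Ioo 0 st,
        deriv (fun y => u y t ^ (n-1)) x = c * (0 - 2 * (x/st)^1 * (1/st)) := by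
      intro x hx
      have heq : (fun y => u y t ^ (n-1)) =ᶠ[nhds x]
          (fun y => c * (1 - (y/st)^2)) := by
        filter_upwards [Ioo_mem_nhds hx.1 hx.2] with y hy
        have ha : 0 < 1 - (y/st)^2 := by
          have h1 : 0 < y / st := div_pos hy.1 hst
          have h2 : y / st < 1 := (div_lt_one hst).2 hy.2
          nlinarith
        rw [hu y t hy.1.le hy.2]
        rw [Real.mul_rpow (by positivity) (Real.rpow_nonneg ha.le _)]
        rw [← Real.rpow_mul ha.le]
        rw [show (1:ℝ)/(n-1) * (n-1) = 1 by field_simp]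
        rw [Real.rpow_one]
      rw [heq.deriv_eq]
      have h1 : HasDerivAt (fun y : ℝ => y / st) (1/st) x := by
        simpa using (hasDerivAt_id x).div_const st
      have h2 : HasDerivAt (fun y : ℝ => (y/st)^2) (2 * (x/st)^1 * (1/st)) x := by
        simpa using h1.fun_pow 2
      have h3 : HasDerivAt (fun y : ℝ => 1 - (y/st)^2)
          (0 - 2 * (x/st)^1 * (1/st)) x := (hasDerivAt_const x 1).sub h2
      exact (h3.const_mul c).deriv
    have hcont : Tendsto (fun x : ℝ => c * (0 - 2 * (x/st)^1 * (1/st)))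
        (nhdsWithin st (Set.Iio st)) (nhds (c * (0 - 2 * (st/st)^1 * (1/st)))) := by
      apply Tendsto.mono_left _ nhdsWithin_le_nhds
      exact (Continuous.tendsto (by continuity) st)
    refine hcont.congr' ?_
    filter_upwards [hmem] with x hx
    exact (hderiv x hx).symm
  · -- the ODE
    have hds : HasDerivAt s ((2*n*(n+1)/(n-1)) * 1 * ((1:ℝ)/(n+1)) *
        A ^ ((1:ℝ)/(n+1) - 1)) t := by
      have hfun : s = fun τ => (2*n*(n+1)/(n-1) * (τ+1)) ^ ((1:ℝ)/(n+1)) :=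
        funext hs
      rw [hfun]
      have hin : HasDerivAt (fun τ : ℝ => 2*n*(n+1)/(n-1) * (τ+1))
          ((2*n*(n+1)/(n-1)) * 1) t := by
        exact ((hasDerivAt_id t).add_const 1).const_mul _
      exact hin.rpow_const (Or.inl (ne_of_gt hA))
    rw [hds.deriv]
    -- rewrite everything in terms of powers of A
    have hstst : st / st = 1 := div_self (ne_of_gt hst)
    have hc : c = A ^ (-(n-1) * ((1:ℝ)/(n+1))) := by
      rw [hc_def, one_div, ← Real.rpow_neg_one st, ← Real.rpow_mul hst.le, hst_eq,
        ← Real.rpow_mul hA.le]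
      congr 1
      ring
    have hinv : (1:ℝ)/st = A ^ (-((1:ℝ)/(n+1))) := by
      rw [one_div, ← Real.rpow_neg_one st, hst_eq, ← Real.rpow_mul hA.le]
      ring_nf
    rw [hstst, hc, hinv]
    rw [show (0 - 2 * (1:ℝ)^1 * A ^ (-((1:ℝ)/(n+1)))) = -2 * A ^ (-((1:ℝ)/(n+1))) by ring]
    rw [show -(n/(n-1)) * (A ^ (-(n-1) * ((1:ℝ)/(n+1))) * (-2 * A ^ (-((1:ℝ)/(n+1)))))
        = (2*n/(n-1)) * (A ^ (-(n-1) * ((1:ℝ)/(n+1))) * A ^ (-((1:ℝ)/(n+1)))) by ring]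
    rw [← Real.rpow_add hA]
    rw [show (1:ℝ)/(n+1) - 1 = -(n-1) * ((1:ℝ)/(n+1)) + -((1:ℝ)/(n+1)) by
      field_simp; ring]
    rw [show 2*n*(n+1)/(n-1) * 1 * ((1:ℝ)/(n+1)) = 2*n/(n-1) by
      field_simp]
end

section
/- Let f : ℝ → ℝ be continuously differentiable on (-∞, ξ₀), positive and strictly decreasing on (-∞, ξ₀), with f(ξ) → 0 as ξ → ξ₀⁻. Suppose n > q > 0, n ≠ q, θ₀ > 0, and (fⁿ)'(ξ) = -θ₀·f(ξ)^q + o(f(ξ)^q) as ξ → ξ₀⁻. Then f(ξ) ~ d^β·(ξ₀-ξ)^β as ξ → ξ₀⁻, where β = 1/(n-q) and d = θ₀(n-q)/n. -/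
open Real Set Filter Topology

/-- Asymptotic front profile of a travelling semi-wave: from
`(fⁿ)'(ξ) = -θ₀ f(ξ)^q + o(f(ξ)^q)` as `ξ → ξ₀⁻` one derives
`f(ξ) ~ d^β (ξ₀-ξ)^β` with `β = 1/(n-q)`, `d = θ₀(n-q)/n`. -/
theorem front_profile_asymptotics (f : ℝ → ℝ) (ξ₀ n q θ₀ : ℝ)
    (hf : ContDiffOn ℝ 1 f (Set.Iio ξ₀))
    (hpos : ∀ ξ < ξ₀, 0 < f ξ)
    (hdec : StrictAntiOn f (Set.Iio ξ₀))
    (hlim : Tendsto f (nhdsWithin ξ₀ (Set.Iio ξ₀)) (nhds 0))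
    (hq : 0 < q) (hqn : q < n)
    (hθ : 0 < θ₀)
    (hasymp : Tendsto (fun ξ => deriv (fun y => f y ^ n) ξ / f ξ ^ q)
      (nhdsWithin ξ₀ (Set.Iio ξ₀)) (nhds (-θ₀))) :
    Tendsto
      (fun ξ => f ξ /
        ((θ₀*(n-q)/n) ^ ((1:ℝ)/(n-q)) * (ξ₀ - ξ) ^ ((1:ℝ)/(n-q))))
      (nhdsWithin ξ₀ (Set.Iio ξ₀)) (nhds 1) := by
  have hn0 : 0 < n := hq.trans hqn
  have hm0 : 0 < n - q := sub_pos.mpr hqn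
  set m := n - q with hm
  set d := θ₀ * m / n with hd
  have hd0 : 0 < d := by positivity
  set g : ℝ → ℝ := fun ξ => f ξ ^ m with hg
  -- differentiability of f at points of Iio ξ₀
  have hfdiff : ∀ ξ ∈ Iio ξ₀, DifferentiableAt ℝ f ξ := by
    intro ξ hξ
    exact (hf.differentiableOn one_ne_zero).differentiableAt (isOpen_Iio.mem_nhds hξ)
  have hmem : ∀ᶠ ξ in 𝓝[<] ξ₀, ξ ∈ Iio ξ₀ := eventually_mem_nhdsWithin
  -- derivative of g
  have hgderiv : ∀ ξ ∈ Iio ξ₀, HasDerivAt g (deriv f ξ * m * f ξ ^ (m - 1)) ξ := by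
    intro ξ hξ
    exact ((hfdiff ξ hξ).hasDerivAt).rpow_const (Or.inl (hpos ξ hξ).ne')
  -- rewrite the given asymptotics in terms of deriv g
  have hkey : ∀ ξ ∈ Iio ξ₀,
      deriv f ξ * m * f ξ ^ (m - 1) = (m / n) * (deriv (fun y => f y ^ n) ξ / f ξ ^ q) := by
    intro ξ hξ
    have hfx : 0 < f ξ := hpos ξ hξ
    have hDn : deriv (fun y => f y ^ n) ξ = deriv f ξ * n * f ξ ^ (n - 1) :=
      (((hfdiff ξ hξ).hasDerivAt).rpow_const (Or.inl hfx.ne')).deriv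
    rw [hDn]
    have h1 : f ξ ^ (n - 1) / f ξ ^ q = f ξ ^ (m - 1) := by
      rw [← Real.rpow_sub hfx, hm]; ring_nf
    have h2 : f ξ ^ (m - 1) * f ξ ^ q = f ξ ^ (n - 1) := by
      rw [← Real.rpow_add hfx, hm]; ring_nf
    field_simp
    rw [mul_assoc, h2]
  have hDtend : Tendsto (fun ξ => deriv f ξ * m * f ξ ^ (m - 1)) (𝓝[<] ξ₀) (𝓝 (-d)) := by
    have : Tendsto (fun ξ => (m / n) * (deriv (fun y => f y ^ n) ξ / f ξ ^ q))
        (𝓝[<] ξ₀) (𝓝 ((m / n) * (-θ₀))) := hasymp.const_mul _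
    have hval : (m / n) * (-θ₀) = -d := by rw [hd]; ring
    rw [hval] at this
    exact this.congr' (by filter_upwards [hmem] with ξ hξ using (hkey ξ hξ).symm)
  -- g tends to 0
  have hgtend : Tendsto g (𝓝[<] ξ₀) (𝓝 0) := by
    have hc : ContinuousAt (fun x : ℝ => x ^ m) 0 :=
      Real.continuousAt_rpow_const 0 m (Or.inr hm0.le)
    have := hc.tendsto.comp hlim
    rw [Real.zero_rpow hm0.ne'] at this; exact this
  -- L'Hôpital: g ξ / (ξ₀ - ξ) → d
  have hslope : Tendsto (fun ξ => g ξ / (ξ₀ - ξ)) (𝓝[<] ξ₀) (𝓝 d) := by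
    apply HasDerivAt.lhopital_zero_nhdsLT
      (f' := fun ξ => deriv f ξ * m * f ξ ^ (m - 1)) (g' := fun _ => (-1 : ℝ))
    · filter_upwards [hmem] with ξ hξ using hgderiv ξ hξ
    · filter_upwards with ξ
      simpa using ((hasDerivAt_id ξ).const_sub ξ₀)
    · filter_upwards with ξ; norm_num
    · exact hgtend
    · have : Tendsto (fun ξ : ℝ => ξ₀ - ξ) (𝓝[<] ξ₀) (𝓝 (ξ₀ - ξ₀)) :=
        (tendsto_const_nhds.sub tendsto_id).mono_left nhdsWithin_le_nhds
      simpa using this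
    · simpa [div_neg] using hDtend.neg
  -- hence g ξ / (d * (ξ₀ - ξ)) → 1
  have hratio : Tendsto (fun ξ => g ξ / (d * (ξ₀ - ξ))) (𝓝[<] ξ₀) (𝓝 1) := by
    have := hslope.div_const d
    rw [div_self hd0.ne'] at this
    refine this.congr (fun ξ => ?_)
    rw [div_div, mul_comm]
  -- compose with rpow (1/m)
  have hc1 : ContinuousAt (fun x : ℝ => x ^ ((1:ℝ)/m)) 1 :=
    Real.continuousAt_rpow_const 1 _ (Or.inl one_ne_zero)
  have hcomp : Tendsto (fun ξ => (g ξ / (d * (ξ₀ - ξ))) ^ ((1:ℝ)/m)) (𝓝[<] ξ₀) (𝓝 1) := by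
    have := hc1.tendsto.comp hratio
    rw [Real.one_rpow] at this; exact this
  refine hcomp.congr' ?_
  filter_upwards [hmem] with ξ hξ
  have hfx : 0 < f ξ := hpos ξ hξ
  have hξ0 : 0 < ξ₀ - ξ := sub_pos.mpr hξ
  have hgnn : 0 ≤ g ξ := (Real.rpow_pos_of_pos hfx m).le
  rw [Real.div_rpow hgnn (by positivity), Real.mul_rpow hd0.le hξ0.le]
  congr 1
  show (f ξ ^ m) ^ ((1:ℝ)/m) = f ξ
  rw [← Real.rpow_mul hfx.le, mul_one_div, div_self hm0.ne', Real.rpow_one]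
end

section
/- Let 1 < p < 2, C₀ > 0, α > 0, L₀ > 0. Define a(t) = (2p(p+1)/(p-1))·t + (p-1)·α, q_r = 1/(p-1), and u(x,t) = a(t)^{-q_r}·[ K·a(t)^{2/(p+1)} - (C₀(p-1)²/(4p²))·a(t)² - x² ]_+^{q_r}, where K = (C₀(p-1)⁴α² + 4p²L₀²)/(4p²((p-1)α)^{2/(p+1)}) and [z]_+ = max(z,0). Then at every point (x,t), t > 0, where the bracket is strictly positive, u satisfies ∂ₜu = ∂ₓ²(u^p) - C₀·u^{2-p}. -/
open Real Set Filter Topology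

/-- Kersner's explicit solution satisfies `∂ₜu = ∂ₓ²(u^p) - C₀ u^{2-p}` at every
point where the bracket is strictly positive. -/
theorem kersner_solves_pde (p C₀ α L₀ : ℝ)
    (hp1 : 1 < p) (hp2 : p < 2) (hC : 0 < C₀) (hα : 0 < α) (hL : 0 < L₀)
    (a : ℝ → ℝ) (ha : ∀ t : ℝ, a t = (2*p*(p+1)/(p-1)) * t + (p-1)*α)
    (K : ℝ)
    (hK : K = (C₀*(p-1)^4*α^2 + 4*p^2*L₀^2) / (4*p^2*((p-1)*α) ^ ((2:ℝ)/(p+1))))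
    (u : ℝ → ℝ → ℝ)
    (hu : ∀ x t : ℝ, u x t = a t ^ (-(1/(p-1))) *
      (max (K * a t ^ ((2:ℝ)/(p+1)) - (C₀*(p-1)^2/(4*p^2)) * a t ^ 2 - x^2) 0)
        ^ ((1:ℝ)/(p-1))) :
    ∀ x t : ℝ, 0 < t →
      0 < K * a t ^ ((2:ℝ)/(p+1)) - (C₀*(p-1)^2/(4*p^2)) * a t ^ 2 - x^2 →
      deriv (fun τ => u x τ) t
        = deriv (deriv (fun y => u y t ^ p)) x - C₀ * u x t ^ (2-p) := by
  intro x t ht hpos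
  have hp0 : (0:ℝ) < p := by linarith
  have hpm : (0:ℝ) < p - 1 := by linarith
  have hpp : (0:ℝ) < p + 1 := by linarith
  set q : ℝ := 1/(p-1) with hq
  set σ : ℝ := (2:ℝ)/(p+1) with hσ
  set c : ℝ := 2*p*(p+1)/(p-1) with hc
  set D : ℝ := C₀*(p-1)^2/(4*p^2) with hD
  have hA : 0 < a t := by
    rw [ha]
    have hc0 : 0 < c := by rw [hc]; positivity
    nlinarith [mul_pos hc0 ht, mul_pos hpm hα]
  set B : ℝ := K * a t ^ σ - D * a t ^ 2 - x ^ 2 with hBdef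
  -- derivative of a
  have haD : ∀ τ : ℝ, HasDerivAt a c τ := by
    intro τ
    have hfa : a = fun s : ℝ => c * s + (p-1)*α := funext fun s => ha s
    rw [hfa]
    simpa using ((hasDerivAt_id τ).const_mul c).add_const ((p-1)*α)
  -- basic positivity of exponents
  have hqpos : 0 < q := by rw [hq]; positivity
  ----------------------------------------------------------------
  -- Time derivative
  ----------------------------------------------------------------
  have hFc : ContinuousAt (fun τ => K * a τ ^ σ - D * a τ ^ 2 - x ^ 2) t := by
    have h1 : ContinuousAt a t := (haD t).continuousAt
    have h2 : ContinuousAt (fun τ => a τ ^ σ) t :=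
      (Real.continuousAt_rpow_const (a t) σ (Or.inl hA.ne')).comp h1
    exact ((continuousAt_const.mul h2).sub (continuousAt_const.mul (h1.pow 2))).sub
      continuousAt_const
  have hev1 : ∀ᶠ τ in 𝓝 t, 0 < K * a τ ^ σ - D * a τ ^ 2 - x ^ 2 :=
    hFc.eventually (eventually_gt_nhds hpos)
  have hueq : (fun τ => u x τ) =ᶠ[𝓝 t]
      fun τ => a τ ^ (-q) * (K * a τ ^ σ - D * a τ ^ 2 - x ^ 2) ^ q := by
    filter_upwards [hev1] with τ h1
    rw [hu x τ, max_eq_left h1.le]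
  have hA2 : HasDerivAt (fun τ => a τ ^ (-q)) (c * (-q) * a t ^ (-q - 1)) t :=
    (haD t).rpow_const (Or.inl hA.ne')
  have hFd : HasDerivAt (fun τ => K * a τ ^ σ - D * a τ ^ 2 - x ^ 2)
      (K * (c * σ * a t ^ (σ - 1)) - D * (2 * a t * c)) t := by
    have h2 : HasDerivAt (fun τ => a τ ^ σ) (c * σ * a t ^ (σ - 1)) t :=
      (haD t).rpow_const (Or.inl hA.ne')
    have h3 : HasDerivAt (fun τ => a τ ^ 2) (2 * a t * c) t := by
      have h := (haD t).pow 2; simp at h; exact h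
    exact ((h2.const_mul K).sub (h3.const_mul D)).sub_const _
  have hT : deriv (fun τ => u x τ) t
      = (c * (-q) * a t ^ (-q - 1)) * B ^ q
        + a t ^ (-q) * ((K * (c * σ * a t ^ (σ - 1)) - D * (2 * a t * c)) * q * B ^ (q - 1)) := by
    rw [hueq.deriv_eq]
    exact (hA2.mul (hFd.rpow_const (Or.inl hpos.ne'))).deriv
  ----------------------------------------------------------------
  -- Space derivatives
  ----------------------------------------------------------------
  have hSC : Continuous (fun y : ℝ => K * a t ^ σ - D * a t ^ 2 - y ^ 2) :=
    continuous_const.sub (continuous_pow 2)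
  have hev3 : ∀ᶠ y in 𝓝 x, 0 < K * a t ^ σ - D * a t ^ 2 - y ^ 2 :=
    hSC.continuousAt.eventually (eventually_gt_nhds hpos)
  have hDS : ∀ y : ℝ, HasDerivAt (fun z : ℝ => K * a t ^ σ - D * a t ^ 2 - z ^ 2)
      (-(2 * y)) y := by
    intro y
    have h := (hasDerivAt_pow 2 y).const_sub (K * a t ^ σ - D * a t ^ 2)
    simpa using h
  have hueq2 : (fun y => u y t ^ p) =ᶠ[𝓝 x]
      fun y => a t ^ (-q * p) * (K * a t ^ σ - D * a t ^ 2 - y ^ 2) ^ (q * p) := by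
    filter_upwards [hev3] with y hy
    rw [hu y t, max_eq_left hy.le,
      Real.mul_rpow (Real.rpow_nonneg hA.le _) (Real.rpow_nonneg hy.le _),
      ← Real.rpow_mul hA.le, ← Real.rpow_mul hy.le]
  set W : ℝ → ℝ := fun y =>
    a t ^ (-q * p) * (-(2 * y) * (q * p) *
      (K * a t ^ σ - D * a t ^ 2 - y ^ 2) ^ (q * p - 1)) with hW
  have hd1 : deriv (fun y => u y t ^ p) =ᶠ[𝓝 x] W := by
    refine hueq2.deriv.trans ?_
    filter_upwards [hev3] with y hy
    exact (((hDS y).rpow_const (Or.inl hy.ne')).const_mul (a t ^ (-q * p))).deriv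
  have hXd : deriv (deriv (fun y => u y t ^ p)) x
      = a t ^ (-q * p) *
        ((-(2 * 1) * (q * p)) * B ^ (q * p - 1)
          + (-(2 * x) * (q * p)) * (-(2 * x) * (q * p - 1) * B ^ (q * p - 1 - 1))) := by
    rw [hd1.deriv_eq]
    have hL : HasDerivAt (fun y : ℝ => -(2 * y) * (q * p)) (-(2 * 1) * (q * p)) x := by
      exact (((hasDerivAt_id x).const_mul 2).neg).mul_const (q * p)
    have hR : HasDerivAt
        (fun y : ℝ => (K * a t ^ σ - D * a t ^ 2 - y ^ 2) ^ (q * p - 1))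
        (-(2 * x) * (q * p - 1) * B ^ (q * p - 1 - 1)) x :=
      (hDS x).rpow_const (Or.inl hpos.ne')
    exact ((hL.mul hR).const_mul (a t ^ (-q * p))).deriv
  ----------------------------------------------------------------
  -- The zero-order term
  ----------------------------------------------------------------
  have hu0 : u x t ^ (2 - p) = a t ^ (-q * (2 - p)) * B ^ (q * (2 - p)) := by
    rw [hu x t, max_eq_left hpos.le,
      Real.mul_rpow (Real.rpow_nonneg hA.le _) (Real.rpow_nonneg hpos.le _),
      ← Real.rpow_mul hA.le, ← Real.rpow_mul hpos.le]
  ----------------------------------------------------------------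
  -- Reduce all rpow's to atoms
  ----------------------------------------------------------------
  have hpm' : p - 1 ≠ 0 := hpm.ne'
  have hpp' : p + 1 ≠ 0 := hpp.ne'
  have hAadd := Real.rpow_add hA
  have hBadd := Real.rpow_add hpos
  have e1 : a t ^ (-q) = a t * a t ^ (-q - 1) := by
    have h := hAadd 1 (-q - 1); rw [Real.rpow_one] at h
    rw [← h]; congr 1; ring
  have e2 : a t ^ (-q * p) = a t ^ (-q - 1) := by
    congr 1; rw [hq]; field_simp
    all_goals ring
  have e3 : B ^ (q * p - 1) = B * B ^ (q - 1) := by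
    have h := hBadd 1 (q - 1); rw [Real.rpow_one] at h
    rw [← h]; congr 1; rw [hq]; field_simp
    all_goals ring
  have e4 : B ^ (q * p - 1 - 1) = B ^ (q - 1) := by
    congr 1; rw [hq]; field_simp
    all_goals ring
    all_goals ring
  have e5 : B ^ q = B * B ^ (q - 1) := by
    have h := hBadd 1 (q - 1); rw [Real.rpow_one] at h
    rw [← h]; congr 1; ring
  have e6 : a t ^ (-q * (2 - p)) = a t * (a t * a t ^ (-q - 1)) := by
    have h2 := hAadd 1 (-q - 1); rw [Real.rpow_one] at h2
    have h1 := hAadd 1 (1 + (-q - 1)); rw [Real.rpow_one] at h1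
    rw [← h2, ← h1]; congr 1; rw [hq]; field_simp
    all_goals ring
  have e7 : B ^ (q * (2 - p)) = B ^ (q - 1) := by
    congr 1; rw [hq]; field_simp
    all_goals ring
    all_goals ring
  have e8 : a t ^ σ = a t * a t ^ (σ - 1) := by
    have h := hAadd 1 (σ - 1); rw [Real.rpow_one] at h
    rw [← h]; congr 1; ring
  -- the relation for x^2
  have hx2 : x ^ 2 = K * (a t * a t ^ (σ - 1)) - D * a t ^ 2 - B := by
    rw [← e8]; rw [hBdef]; ring
  ----------------------------------------------------------------
  -- Final algebraic identity
  ----------------------------------------------------------------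
  rw [hT, hXd, hu0, e1, e2, e3, e4, e5, e6, e7]
  set s : ℝ := a t ^ (-q - 1) with hs
  set b : ℝ := B ^ (q - 1) with hb
  set m : ℝ := a t ^ (σ - 1) with hm
  have hp' : p ≠ 0 := hp0.ne'
  clear_value s b m
  clear_value B
  rw [hD] at hx2
  rw [hq, hσ, hc, hD]
  linear_combination (norm := (field_simp; ring)) (-4 * s * b * p / (p - 1) ^ 2) * hx2
end

section
/- Let 1 < p < 2, C₀ > 0 and let u be Kersner's explicit solution of ∂ₜu = ∂ₓ²u^p - C₀u^{2-p} with interface s(t) (the positive root of the bracket). Set β = 1/(p-1) and w = u^{p-1}. Then the interface satisfies the ODE ṡ(t) = -(p/(p-1))·∂ₓw(s(t),t) + C₀(p-1)/∂ₓw(s(t),t), where ∂ₓw(s(t),t) denotes the one-sided limit of ∂ₓw as x → s(t)⁻. -/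
open Real Set Filter


private lemma kersner_alg (p C₀ K aa S X : ℝ) (hp : 0 < p - 1) (hp1 : 0 < p + 1)
    (hp0 : 0 < p) (ha : 0 < aa) (hS : 0 < S) (hX : 0 < X)
    (h2 : S ^ 2 = K * X - C₀ * (p-1)^2 / (4*p^2) * aa ^ 2) :
    (K * (2*p*(p+1)/(p-1) * ((2:ℝ)/(p+1)) * (X / aa))
        - C₀*(p-1)^2/(4*p^2) * (2 * aa * (2*p*(p+1)/(p-1)))) / (2 * S)
      = -(p/(p-1)) * (-2 * S / aa) + C₀*(p-1) / (-2 * S / aa) := by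
  have hKX : K * X = S ^ 2 + C₀ * (p-1)^2 / (4*p^2) * aa ^ 2 := by linarith
  have h3 : K * (2*p*(p+1)/(p-1) * ((2:ℝ)/(p+1)) * (X / aa))
      = 2*p*(p+1)/(p-1) * ((2:ℝ)/(p+1)) / aa * (K * X) := by ring
  rw [h3, hKX]
  have hpn : p - 1 ≠ 0 := hp.ne'
  have hpn1 : p + 1 ≠ 0 := hp1.ne'
  field_simp
  ring

/-- The interface of Kersner's solution satisfies
`ṡ = -(p/(p-1))·∂ₓw + C₀(p-1)/∂ₓw` with `w = u^{p-1}`, where `∂ₓw` at the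
interface is the one-sided limit as `x → s(t)⁻`. -/
theorem kersner_interface_ode (p C₀ α L₀ : ℝ)
    (hp1 : 1 < p) (hp2 : p < 2) (hC : 0 < C₀) (hα : 0 < α) (hL : 0 < L₀)
    (a : ℝ → ℝ) (ha : ∀ t : ℝ, a t = (2*p*(p+1)/(p-1)) * t + (p-1)*α)
    (K : ℝ)
    (hK : K = (C₀*(p-1)^4*α^2 + 4*p^2*L₀^2) / (4*p^2*((p-1)*α) ^ ((2:ℝ)/(p+1))))
    (u : ℝ → ℝ → ℝ)
    (hu : ∀ x t : ℝ, u x t = a t ^ (-(1/(p-1))) *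
      (max (K * a t ^ ((2:ℝ)/(p+1)) - (C₀*(p-1)^2/(4*p^2)) * a t ^ 2 - x^2) 0)
        ^ ((1:ℝ)/(p-1)))
    (s : ℝ → ℝ)
    (hsdef : ∀ t : ℝ,
      s t = Real.sqrt (K * a t ^ ((2:ℝ)/(p+1)) - (C₀*(p-1)^2/(4*p^2)) * a t ^ 2)) :
    ∀ t : ℝ, 0 < t →
      0 < K * a t ^ ((2:ℝ)/(p+1)) - (C₀*(p-1)^2/(4*p^2)) * a t ^ 2 →
      ∃ L : ℝ,
        Tendsto (fun x => deriv (fun y => u y t ^ (p-1)) x)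
          (nhdsWithin (s t) (Set.Iio (s t))) (nhds L) ∧
        deriv s t = -(p/(p-1)) * L + C₀*(p-1) / L := by
  intro t ht hA
  have hp : (0:ℝ) < p - 1 := by linarith
  have hp1' : (0:ℝ) < p + 1 := by linarith
  have hp0 : (0:ℝ) < p := by linarith
  have hat : 0 < a t := by
    rw [ha]
    have h1 : 0 < 2*p*(p+1)/(p-1) * t := mul_pos (div_pos (by nlinarith) hp) ht
    nlinarith [mul_pos hp hα]
  set c : ℝ := C₀*(p-1)^2/(4*p^2) with hc
  set r : ℝ := (2:ℝ)/(p+1) with hr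
  set m : ℝ := 2*p*(p+1)/(p-1) with hm
  -- abbreviations
  set A : ℝ := K * a t ^ r - c * a t ^ 2 with hAdef
  have hS : 0 < Real.sqrt A := Real.sqrt_pos.mpr hA
  have hS2 : Real.sqrt A ^ 2 = A := Real.sq_sqrt hA.le
  have hst : s t = Real.sqrt A := hsdef t
  have hstpos : 0 < s t := by rw [hst]; exact hS
  refine ⟨-2 * Real.sqrt A / a t, ?_, ?_⟩
  · -- the one-sided limit
    have hderiv : ∀ x ∈ Ioo (-(s t)) (s t),
        deriv (fun y => u y t ^ (p-1)) x = (a t)⁻¹ * (-(2*x)) := by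
      intro x hx
      have hxIoo : Ioo (-(s t)) (s t) ∈ nhds x := isOpen_Ioo.mem_nhds hx
      have heq : (fun y => u y t ^ (p-1)) =ᶠ[nhds x]
          (fun y => (a t)⁻¹ * (A - y^2)) := by
        filter_upwards [hxIoo] with y hy
        have hy2 : y^2 < A := by
          have hys : |y| < s t := abs_lt.mpr ⟨hy.1, hy.2⟩
          calc y^2 = |y|^2 := (sq_abs y).symm
            _ < s t ^ 2 := by
                exact pow_lt_pow_left₀ hys (abs_nonneg y) (by norm_num)
            _ = A := by rw [hst]; exact hS2
        have hpos : (0:ℝ) < A - y^2 := by linarith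
        have hmax : max (K * a t ^ r - c * a t ^ 2 - y^2) 0
            = A - y^2 := by
          rw [← hAdef]; exact max_eq_left hpos.le
        rw [hu, hmax, Real.mul_rpow (Real.rpow_nonneg hat.le _)
          (Real.rpow_nonneg hpos.le _), ← Real.rpow_mul hat.le,
          ← Real.rpow_mul hpos.le]
        have e1 : -(1/(p-1)) * (p-1) = -1 := by field_simp
        have e2 : (1:ℝ)/(p-1) * (p-1) = 1 := by field_simp
        rw [e1, e2, Real.rpow_neg_one, Real.rpow_one]
      rw [Filter.EventuallyEq.deriv_eq heq]
      have hd : HasDerivAt (fun y : ℝ => (a t)⁻¹ * (A - y^2))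
          ((a t)⁻¹ * (0 - 2*x)) x := by
        have h2 : HasDerivAt (fun y : ℝ => y^2) (2*x) x := by
          simpa using hasDerivAt_pow 2 x
        exact ((hasDerivAt_const x A).sub h2).const_mul _
      rw [hd.deriv]; ring
    have hmem : Ioo (-(s t)) (s t) ∈ nhdsWithin (s t) (Iio (s t)) := by
      have h1 : Ioi (-(s t)) ∈ nhdsWithin (s t) (Iio (s t)) :=
        nhdsWithin_le_nhds (Ioi_mem_nhds (by linarith))
      have h2 : Iio (s t) ∈ nhdsWithin (s t) (Iio (s t)) := self_mem_nhdsWithin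
      have := Filter.inter_mem h1 h2
      simpa [Set.Ioi_inter_Iio] using this
    have hev : (fun x => (a t)⁻¹ * (-(2*x)))
        =ᶠ[nhdsWithin (s t) (Iio (s t))] (fun x => deriv (fun y => u y t ^ (p-1)) x) := by
      filter_upwards [hmem] with x hx
      exact (hderiv x hx).symm
    have hcont : Tendsto (fun x : ℝ => (a t)⁻¹ * (-(2*x)))
        (nhdsWithin (s t) (Iio (s t))) (nhds (-2 * Real.sqrt A / a t)) := by
      have hcnt : Continuous fun x : ℝ => (a t)⁻¹ * (-(2*x)) :=
        continuous_const.mul ((continuous_const.mul continuous_id).neg)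
      have : Tendsto (fun x : ℝ => (a t)⁻¹ * (-(2*x)))
          (nhdsWithin (s t) (Iio (s t))) (nhds ((a t)⁻¹ * (-(2 * s t)))) :=
        (hcnt.tendsto (s t)).mono_left nhdsWithin_le_nhds
      have hval : (a t)⁻¹ * (-(2 * s t)) = -2 * Real.sqrt A / a t := by
        rw [hst]; ring
      rwa [hval] at this
    exact hcont.congr' hev
  · -- the ODE for the interface
    have haD : HasDerivAt a m t := by
      have hfa : a = fun τ => m * τ + (p-1)*α := funext ha
      rw [hfa]
      simpa using ((hasDerivAt_id t).const_mul m).add_const ((p-1)*α)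
    have h1 : HasDerivAt (fun τ => a τ ^ r) (m * r * a t ^ (r-1)) t :=
      haD.rpow_const (Or.inl hat.ne')
    have h2 : HasDerivAt (fun τ => a τ ^ 2) (2 * a t * m) t := by
      simpa [mul_comm, mul_assoc, mul_left_comm] using haD.fun_pow 2
    have hAD : HasDerivAt (fun τ => K * a τ ^ r - c * a τ ^ 2)
        (K * (m * r * a t ^ (r-1)) - c * (2 * a t * m)) t :=
      (h1.const_mul K).sub (h2.const_mul c)
    have hSD : HasDerivAt s
        ((K * (m * r * a t ^ (r-1)) - c * (2 * a t * m)) / (2 * Real.sqrt A)) t := by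
      have hsfun : s = fun τ => Real.sqrt (K * a τ ^ r - c * a τ ^ 2) :=
        funext hsdef
      rw [hsfun]
      exact hAD.sqrt (by rw [← hAdef]; exact hA.ne')
    rw [hSD.deriv]
    have hX0 : (0:ℝ) < a t ^ r := Real.rpow_pos_of_pos hat r
    have hX : a t ^ (r - 1) = a t ^ r / a t := by
      rw [Real.rpow_sub hat, Real.rpow_one]
    have harg : Real.sqrt A ^ 2 = K * a t ^ r - C₀*(p-1)^2/(4*p^2) * a t ^ 2 := by
      rw [hS2, hAdef]
    have halg := kersner_alg p C₀ K (a t) (Real.sqrt A) (a t ^ r)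
      hp hp1' hp0 hat hS hX0 harg
    rw [hX]
    calc (K * (m * r * (a t ^ r / a t)) - c * (2 * a t * m)) / (2 * Real.sqrt A)
        = (K * (2*p*(p+1)/(p-1) * ((2:ℝ)/(p+1)) * (a t ^ r / a t))
            - C₀*(p-1)^2/(4*p^2) * (2 * a t * (2*p*(p+1)/(p-1)))) / (2 * Real.sqrt A) := by
          rw [hc, hm, hr]
      _ = -(p/(p-1)) * (-2 * Real.sqrt A / a t) + C₀*(p-1) / (-2 * Real.sqrt A / a t) := halg
end

section
/- Let a₀, c₀, w be real-valued functions with a₀(x,t) ≥ δ > 0, α > 1, and suppose w is C¹ up to x = s(t) with w(s(t),t) = 0, w > 0 for x < s(t), and (α-1)·a₀·(∂ₓw)² + (c₀/α)·w^{(m-1)α+2} → 0 as x → s(t)⁻, where c₀ ≤ -δ < 0 and (m-1)α + 2 = 0 (i.e. α = 2/(1-m) with 0 ≤ m < 1). Then ∂ₓw(x,t) → -√(-c₀(s(t),t)/(α(α-1)·a₀(s(t),t))) as x → s(t)⁻, using that ∂ₓw ≤ 0 near the interface. -/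
open Real Set Filter

/-- Boundary slope for the non-degenerate (oxygen-consumption type) problem:
cancellation of the singular terms forces
`∂ₓw → -√(-c₀/(α(α-1)a₀))` at the interface. -/
theorem oxygen_boundary_slope (a₀ c₀ w : ℝ → ℝ → ℝ) (s : ℝ → ℝ) (t δ α m ε : ℝ)
    (hδ : 0 < δ) (hε : 0 < ε)
    (ha : ∀ x τ : ℝ, δ ≤ a₀ x τ) (hc : ∀ x τ : ℝ, c₀ x τ ≤ -δ)
    (hm0 : 0 ≤ m) (hm1 : m < 1) (hα : α = 2/(1-m)) (hα1 : 1 < α)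
    (ha0c : ContinuousAt (fun x => a₀ x t) (s t))
    (hc0c : ContinuousAt (fun x => c₀ x t) (s t))
    (hw0 : w (s t) t = 0)
    (hwpos : ∀ x ∈ Set.Ioo (s t - ε) (s t), 0 < w x t)
    (hwC1 : ContDiffOn ℝ 1 (fun x => w x t) (Set.Ioc (s t - ε) (s t)))
    (hwd : ∀ x ∈ Set.Ioo (s t - ε) (s t), deriv (fun y => w y t) x ≤ 0)
    (hcancel : Tendsto
      (fun x => (α-1) * a₀ x t * (deriv (fun y => w y t) x)^2
        + (c₀ x t / α) * w x t ^ ((m-1)*α+2))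
      (nhdsWithin (s t) (Set.Iio (s t))) (nhds 0)) :
    Tendsto (fun x => deriv (fun y => w y t) x)
      (nhdsWithin (s t) (Set.Iio (s t)))
      (nhds (-(Real.sqrt (-(c₀ (s t) t) / (α*(α-1)*a₀ (s t) t))))) := by
  have hm : (1:ℝ) - m ≠ 0 := by linarith
  have hexp : (m-1)*α+2 = 0 := by rw [hα]; field_simp; ring
  set d := fun x => deriv (fun y => w y t) x with hd
  set nw := nhdsWithin (s t) (Set.Iio (s t)) with hnw
  have hα0 : α ≠ 0 := by intro h; rw [h] at hα1; linarith
  have hα1' : α - 1 ≠ 0 := by intro h; linarith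
  have has : (0:ℝ) < a₀ (s t) t := lt_of_lt_of_le hδ (ha _ _)
  have hden_ne : (α-1) * a₀ (s t) t ≠ 0 := by positivity
  simp only [hexp, Real.rpow_zero, mul_one] at hcancel
  -- limit of c₀/α within
  have hcB : Tendsto (fun x => c₀ x t / α) nw (nhds (c₀ (s t) t / α)) :=
    (hc0c.tendsto.mono_left nhdsWithin_le_nhds).div_const α
  have hg : Tendsto (fun x => (α-1) * a₀ x t * (d x)^2) nw
      (nhds (-(c₀ (s t) t) / α)) := by
    have h := hcancel.sub hcB
    simp only [add_sub_cancel_right, zero_sub, ← neg_div] at h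
    exact h
  have hden : Tendsto (fun x => (α-1) * a₀ x t) nw (nhds ((α-1) * a₀ (s t) t)) :=
    (tendsto_const_nhds.mul (ha0c.tendsto.mono_left nhdsWithin_le_nhds))
  have hsq : Tendsto (fun x => (d x)^2) nw
      (nhds (-(c₀ (s t) t) / (α*(α-1)*a₀ (s t) t))) := by
    have h := hg.div hden hden_ne
    have heq : ∀ x, ((α-1) * a₀ x t * (d x)^2) / ((α-1) * a₀ x t) = (d x)^2 := by
      intro x
      have : (α-1) * a₀ x t ≠ 0 := by
        have := lt_of_lt_of_le hδ (ha x t); positivity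
      field_simp
      exact mul_div_cancel_left₀ _ (ne_of_gt (lt_of_lt_of_le hδ (ha x t)))
    have hval : (-(c₀ (s t) t) / α) / ((α-1) * a₀ (s t) t)
        = -(c₀ (s t) t) / (α*(α-1)*a₀ (s t) t) := by
      rw [div_div, mul_assoc]
    rw [hval] at h
    exact h.congr heq
  have hsqrt : Tendsto (fun x => Real.sqrt ((d x)^2)) nw
      (nhds (Real.sqrt (-(c₀ (s t) t) / (α*(α-1)*a₀ (s t) t)))) :=
    hsq.sqrt
  have hneg := hsqrt.neg
  refine hneg.congr' ?_
  have hmem : Set.Ioo (s t - ε) (s t) ∈ nw :=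
    Ioo_mem_nhdsLT_of_mem ⟨by linarith, le_refl _⟩
  filter_upwards [hmem] with x hx
  have hdx : d x ≤ 0 := hwd x hx
  rw [Real.sqrt_sq_eq_abs, abs_of_nonpos hdx, neg_neg]
end
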